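/- Let Γ be the set of subprobability measures μ on Δ = {(x,y)∈[0,1]²: y≥x} with subuniform marginals. Then for every μ ∈ Γ, I₁(μ) := ∫_Δ (y−x) dμ ≤ 1/4, with equality if and only if μ is a subprobability on [0,1/2]×[1/2,1] with uniform marginals (i.e., μ ∈ Γ̃). -/

import Mathlib

open MeasureTheory Set Filter
open scoped ENNReal NNReal

namespace S17

lemma ofReal_max0 (x : ℝ) : ENNReal.ofReal (max x 0) = ENNReal.ofReal x := by
  rcases le_total x 0 with h | h
  · rw [max_eq_right h, ENNReal.ofReal_zero, eq_comm, ENNReal.ofReal_eq_zero]; exact h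
  · rw [max_eq_left h]

lemma ofReal_le_of_forall_sub {c : ℝ} {m : ℝ≥0∞}
    (h : ∀ ε : ℝ, 0 < ε → ENNReal.ofReal (c - ε) ≤ m) : ENNReal.ofReal c ≤ m := by
  refine ENNReal.le_of_forall_pos_le_add fun ε hε _ => ?_
  have h1 : ENNReal.ofReal c ≤ ENNReal.ofReal (c - ε) + ENNReal.ofReal ε := by
    calc ENNReal.ofReal c = ENNReal.ofReal ((c - ε) + ε) := by ring_nf
    _ ≤ _ := ENNReal.ofReal_add_le
  refine h1.trans ?_
  rw [ENNReal.ofReal_coe_nnreal]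
  exact add_le_add_left (h ε hε) _

lemma le_ofReal_of_forall_add {c : ℝ} {m : ℝ≥0∞}
    (h : ∀ ε : ℝ, 0 < ε → m ≤ ENNReal.ofReal (c + ε)) : m ≤ ENNReal.ofReal c := by
  refine ENNReal.le_of_forall_pos_le_add fun ε hε _ => ?_
  refine (h ε hε).trans ?_
  have h1 : ENNReal.ofReal (c + ε) ≤ ENNReal.ofReal c + ENNReal.ofReal ε :=
    ENNReal.ofReal_add_le
  rw [ENNReal.ofReal_coe_nnreal] at h1
  exact h1

lemma dense_of_null_diff {S : Set ℝ} {α β a b : ℝ} (h : volume (Ioo α β \ S) = 0)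
    (hα : α ≤ a) (hab : a < b) (hβ : b ≤ β) : ∃ s, s ∈ S ∧ a < s ∧ s < b := by
  by_contra hc
  push_neg at hc
  have hsub : Ioo a b ⊆ Ioo α β \ S := by
    intro t ht
    exact ⟨⟨lt_of_le_of_lt hα ht.1, lt_of_lt_of_le ht.2 hβ⟩,
      fun hts => absurd (hc t hts ht.1) (not_le.mpr ht.2)⟩
  have := measure_mono_null hsub h
  rw [Real.volume_Ioo] at this
  exact absurd this (by simp [ENNReal.ofReal_eq_zero, hab, not_le, sub_pos])

lemma A_layer (μ : Measure (ℝ × ℝ)) :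
    ∫⁻ p, ENNReal.ofReal (1/2 - p.1) ∂μ
      = ∫⁻ t in Ioi (0:ℝ), μ {p : ℝ × ℝ | p.1 < 1/2 - t} := by
  rw [lintegral_congr fun p : ℝ × ℝ => (ofReal_max0 (1/2 - p.1)).symm]
  rw [lintegral_eq_lintegral_meas_lt (f := fun p : ℝ × ℝ => max (1/2 - p.1) 0) μ
    (Eventually.of_forall fun p => le_max_right _ _)
    ((continuous_const.sub continuous_fst).max continuous_const).aemeasurable]
  refine setLIntegral_congr_fun measurableSet_Ioi (fun t ht => ?_)
  congr 1
  ext p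
  simp only [mem_setOf_eq, lt_max_iff]
  constructor
  · rintro (h | h)
    · linarith
    · exact absurd h (by simp only [mem_Ioi] at ht; linarith)
  · intro h; left; linarith

lemma B_layer (μ : Measure (ℝ × ℝ)) :
    ∫⁻ p, ENNReal.ofReal (p.2 - 1/2) ∂μ
      = ∫⁻ t in Ioi (0:ℝ), μ {p : ℝ × ℝ | 1/2 + t < p.2} := by
  rw [lintegral_congr fun p : ℝ × ℝ => (ofReal_max0 (p.2 - 1/2)).symm]
  rw [lintegral_eq_lintegral_meas_lt (f := fun p : ℝ × ℝ => max (p.2 - 1/2) 0) μ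
    (Eventually.of_forall fun p => le_max_right _ _)
    ((continuous_snd.sub continuous_const).max continuous_const).aemeasurable]
  refine setLIntegral_congr_fun measurableSet_Ioi (fun t ht => ?_)
  congr 1
  ext p
  simp only [mem_setOf_eq, lt_max_iff]
  constructor
  · rintro (h | h)
    · linarith
    · exact absurd h (by simp only [mem_Ioi] at ht; linarith)
  · intro h; left; linarith

lemma C_val : (∫⁻ t in Ioi (0:ℝ), ENNReal.ofReal (1/2 - t)) = ENNReal.ofReal (1/8) := by
  have hsplit : Ioi (0:ℝ) = Ioc 0 (1/2) ∪ Ioi (1/2) := by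
    rw [Ioc_union_Ioi_eq_Ioi (by norm_num : (0:ℝ) ≤ 1/2)]
  have hdisj : Disjoint (Ioc (0:ℝ) (1/2)) (Ioi (1/2)) := by
    rw [Set.disjoint_left]
    intro t ht1 ht2
    simp only [mem_Ioc] at ht1; simp only [mem_Ioi] at ht2; linarith
  rw [hsplit, lintegral_union measurableSet_Ioi hdisj]
  have h2 : (∫⁻ t in Ioi ((1:ℝ)/2), ENNReal.ofReal (1/2 - t)) = 0 := by
    have hz : ∀ t : ℝ, t ∈ Ioi ((1:ℝ)/2) → ENNReal.ofReal (1/2 - t) = (fun _ : ℝ => (0:ℝ≥0∞)) t :=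
      fun t ht => ENNReal.ofReal_eq_zero.mpr (by simp only [mem_Ioi] at ht; linarith)
    rw [setLIntegral_congr_fun (g := fun _ => 0) measurableSet_Ioi hz,
      lintegral_zero]
  rw [h2, add_zero]
  have hint : IntegrableOn (fun t : ℝ => 1/2 - t) (Ioc 0 (1/2)) volume := by
    apply Continuous.integrableOn_Ioc
    exact continuous_const.sub continuous_id
  rw [← ofReal_integral_eq_lintegral_ofReal hint]
  · congr 1
    rw [← _root_.intervalIntegral.integral_of_le (by norm_num : (0:ℝ) ≤ 1/2)]
    open intervalIntegral in
    rw [integral_sub (intervalIntegrable_const) intervalIntegrable_id, integral_id]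
    simp
    norm_num
  · rw [Filter.EventuallyLE, ae_restrict_iff' measurableSet_Ioc]
    refine Eventually.of_forall fun t ht => ?_
    simp only [mem_Ioc] at ht
    simp only [Pi.zero_apply]
    linarith [ht.2]

end S17

/-- The triangle `Δ = {(x,y) ∈ [0,1]² : y ≥ x}`. -/
def Tri : Set (ℝ × ℝ) := {p : ℝ × ℝ | 0 ≤ p.1 ∧ p.1 ≤ p.2 ∧ p.2 ≤ 1}

/-- for a subprobability `μ` on `Δ` with subuniform marginals,
`I₁(μ) = ∫_Δ (y−x) dμ ≤ 1/4`, with equality iff `μ` is a subprobability on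
`[0,1/2]×[1/2,1]` with uniform marginals. -/
theorem stmt17 (μ : Measure (ℝ × ℝ))
    (hsub : μ Set.univ ≤ 1)
    (hsupp : μ Triᶜ = 0)
    (hx : ∀ a b : ℝ, a ≤ b → μ {p : ℝ × ℝ | a ≤ p.1 ∧ p.1 ≤ b} ≤ ENNReal.ofReal (b - a))
    (hy : ∀ a b : ℝ, a ≤ b → μ {p : ℝ × ℝ | a ≤ p.2 ∧ p.2 ≤ b} ≤ ENNReal.ofReal (b - a)) :
    (∫ p : ℝ × ℝ, (p.2 - p.1) ∂μ) ≤ 1 / 4 ∧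
      ((∫ p : ℝ × ℝ, (p.2 - p.1) ∂μ) = 1 / 4 ↔
        (μ ((Set.Icc (0 : ℝ) (1 / 2) ×ˢ Set.Icc (1 / 2 : ℝ) 1)ᶜ) = 0 ∧
          (∀ a b : ℝ, 0 ≤ a → a ≤ b → b ≤ 1 / 2 →
            μ {p : ℝ × ℝ | a ≤ p.1 ∧ p.1 ≤ b} = ENNReal.ofReal (b - a)) ∧
          (∀ a b : ℝ, 1 / 2 ≤ a → a ≤ b → b ≤ 1 →
            μ {p : ℝ × ℝ | a ≤ p.2 ∧ p.2 ≤ b} = ENNReal.ofReal (b - a)))) := by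
  haveI : IsFiniteMeasure μ := ⟨lt_of_le_of_lt hsub ENNReal.one_lt_top⟩
  -- measurability facts
  have mA : Measurable fun p : ℝ × ℝ => ENNReal.ofReal (1/2 - p.1) :=
    (measurable_const.sub measurable_fst).ennreal_ofReal
  have mB : Measurable fun p : ℝ × ℝ => ENNReal.ofReal (p.2 - 1/2) :=
    (measurable_snd.sub measurable_const).ennreal_ofReal
  have hbound_meas : Measurable fun t : ℝ => ENNReal.ofReal (1/2 - t) :=
    (measurable_const.sub measurable_id).ennreal_ofReal
  have hTri_ae : ∀ᵐ p ∂μ, p ∈ Tri := by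
    rw [ae_iff]
    exact measure_mono_null (fun p hp => hp) hsupp
  set L := ∫⁻ p, ENNReal.ofReal (p.2 - p.1) ∂μ with hLdef
  set A := ∫⁻ p, ENNReal.ofReal (1/2 - p.1) ∂μ with hAdef
  set B := ∫⁻ p, ENNReal.ofReal (p.2 - 1/2) ∂μ with hBdef
  have hInt : (∫ p : ℝ × ℝ, (p.2 - p.1) ∂μ) = L.toReal := by
    rw [hLdef, integral_eq_lintegral_of_nonneg_ae]
    · exact hTri_ae.mono fun p hp => sub_nonneg.mpr hp.2.1
    · exact (continuous_snd.sub continuous_fst).aestronglyMeasurable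
  have hpt : ∀ p : ℝ × ℝ, ENNReal.ofReal (p.2 - p.1)
      ≤ ENNReal.ofReal (1/2 - p.1) + ENNReal.ofReal (p.2 - 1/2) := fun p => by
    rw [show p.2 - p.1 = (1/2 - p.1) + (p.2 - 1/2) by ring]
    exact ENNReal.ofReal_add_le
  have hLAB : L ≤ A + B := by
    rw [hLdef, hAdef, hBdef, ← lintegral_add_left mA]
    exact lintegral_mono hpt
  have hAlayer : A = ∫⁻ t in Ioi (0:ℝ), μ {p : ℝ × ℝ | p.1 < 1/2 - t} := S17.A_layer μ
  have hBlayer : B = ∫⁻ t in Ioi (0:ℝ), μ {p : ℝ × ℝ | 1/2 + t < p.2} := S17.B_layer μ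
  -- general upper bounds on the tails
  have hgA : ∀ t : ℝ, 0 < t →
      μ {p : ℝ × ℝ | p.1 < 1/2 - t} ≤ ENNReal.ofReal (1/2 - t) := by
    intro t _
    have hsubset : {p : ℝ × ℝ | p.1 < 1/2 - t}
        ⊆ {p : ℝ × ℝ | 0 ≤ p.1 ∧ p.1 ≤ 1/2 - t} ∪ Triᶜ := by
      intro p hp
      by_cases hT : p ∈ Tri
      · exact Or.inl ⟨hT.1, le_of_lt hp⟩
      · exact Or.inr hT
    have h1 : μ {p : ℝ × ℝ | p.1 < 1/2 - t} ≤ μ {p : ℝ × ℝ | 0 ≤ p.1 ∧ p.1 ≤ 1/2 - t} := by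
      calc μ {p : ℝ × ℝ | p.1 < 1/2 - t}
          ≤ μ ({p : ℝ × ℝ | 0 ≤ p.1 ∧ p.1 ≤ 1/2 - t} ∪ Triᶜ) := measure_mono hsubset
        _ ≤ μ {p : ℝ × ℝ | 0 ≤ p.1 ∧ p.1 ≤ 1/2 - t} + μ Triᶜ := measure_union_le _ _
        _ = μ {p : ℝ × ℝ | 0 ≤ p.1 ∧ p.1 ≤ 1/2 - t} := by rw [hsupp, add_zero]
    rcases le_or_gt 0 (1/2 - t) with h | h
    · refine h1.trans ?_
      have := hx 0 (1/2 - t) h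
      rwa [sub_zero] at this
    · have hempty : {p : ℝ × ℝ | 0 ≤ p.1 ∧ p.1 ≤ 1/2 - t} = ∅ := by
        ext p; simp only [mem_setOf_eq, mem_empty_iff_false, iff_false, not_and, not_le]
        intro h0; linarith
      refine h1.trans ?_
      rw [hempty, measure_empty]
      exact zero_le
  have hgB : ∀ t : ℝ, 0 < t →
      μ {p : ℝ × ℝ | 1/2 + t < p.2} ≤ ENNReal.ofReal (1/2 - t) := by
    intro t _
    have hsubset : {p : ℝ × ℝ | 1/2 + t < p.2}
        ⊆ {p : ℝ × ℝ | 1/2 + t ≤ p.2 ∧ p.2 ≤ 1} ∪ Triᶜ := by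
      intro p hp
      by_cases hT : p ∈ Tri
      · exact Or.inl ⟨le_of_lt hp, hT.2.2⟩
      · exact Or.inr hT
    have h1 : μ {p : ℝ × ℝ | 1/2 + t < p.2} ≤ μ {p : ℝ × ℝ | 1/2 + t ≤ p.2 ∧ p.2 ≤ 1} := by
      calc μ {p : ℝ × ℝ | 1/2 + t < p.2}
          ≤ μ ({p : ℝ × ℝ | 1/2 + t ≤ p.2 ∧ p.2 ≤ 1} ∪ Triᶜ) := measure_mono hsubset
        _ ≤ μ {p : ℝ × ℝ | 1/2 + t ≤ p.2 ∧ p.2 ≤ 1} + μ Triᶜ := measure_union_le _ _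
        _ = μ {p : ℝ × ℝ | 1/2 + t ≤ p.2 ∧ p.2 ≤ 1} := by rw [hsupp, add_zero]
    rcases le_or_gt (1/2 + t) 1 with h | h
    · refine h1.trans ?_
      have := hy (1/2 + t) 1 h
      rwa [show (1:ℝ) - (1/2 + t) = 1/2 - t by ring] at this
    · have hempty : {p : ℝ × ℝ | 1/2 + t ≤ p.2 ∧ p.2 ≤ 1} = ∅ := by
        ext p; simp only [mem_setOf_eq, mem_empty_iff_false, iff_false, not_and, not_le]
        intro h0; linarith
      refine h1.trans ?_
      rw [hempty, measure_empty]
      exact zero_le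
  have hA8 : A ≤ ENNReal.ofReal (1/8) := by
    rw [hAlayer, ← S17.C_val]
    exact setLIntegral_mono hbound_meas fun t ht => hgA t ht
  have hB8 : B ≤ ENNReal.ofReal (1/8) := by
    rw [hBlayer, ← S17.C_val]
    exact setLIntegral_mono hbound_meas fun t ht => hgB t ht
  have hAB4 : ENNReal.ofReal (1/8) + ENNReal.ofReal (1/8) = ENNReal.ofReal (1/4) := by
    rw [← ENNReal.ofReal_add (by norm_num) (by norm_num)]
    norm_num
  have hL4 : L ≤ ENNReal.ofReal (1/4) := by
    refine hLAB.trans ?_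
    calc A + B ≤ ENNReal.ofReal (1/8) + ENNReal.ofReal (1/8) := add_le_add hA8 hB8
      _ = ENNReal.ofReal (1/4) := hAB4
  have hineq : (∫ p : ℝ × ℝ, (p.2 - p.1) ∂μ) ≤ 1/4 := by
    rw [hInt]
    exact ENNReal.toReal_le_of_le_ofReal (by norm_num) hL4
  refine ⟨hineq, ?_, ?_⟩
  · -- forward direction
    intro heq
    have hLfin : L ≠ ⊤ := ne_top_of_le_ne_top ENNReal.ofReal_ne_top hL4
    have hLeq : L = ENNReal.ofReal (1/4) := by
      rw [← ENNReal.ofReal_toReal hLfin, ← hInt, heq]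
    have hABeq : A + B = ENNReal.ofReal (1/4) := by
      refine le_antisymm ?_ (hLeq ▸ hLAB)
      calc A + B ≤ ENNReal.ofReal (1/8) + ENNReal.ofReal (1/8) := add_le_add hA8 hB8
        _ = ENNReal.ofReal (1/4) := hAB4
    have hquarter_sub : ENNReal.ofReal (1/4) - ENNReal.ofReal (1/8) = ENNReal.ofReal (1/8) := by
      rw [← ENNReal.ofReal_sub _ (by norm_num)]
      norm_num
    have hAeq : A = ENNReal.ofReal (1/8) := by
      refine le_antisymm hA8 ?_
      have h' : ENNReal.ofReal (1/4) ≤ A + ENNReal.ofReal (1/8) := by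
        rw [← hABeq]; exact add_le_add_right hB8 A
      have h'' := tsub_le_iff_right.mpr h'
      rwa [hquarter_sub] at h''
    have hBeq : B = ENNReal.ofReal (1/8) := by
      refine le_antisymm hB8 ?_
      have h' : ENNReal.ofReal (1/4) ≤ B + ENNReal.ofReal (1/8) := by
        rw [← hABeq, add_comm A B]; exact add_le_add_right hA8 B
      have h'' := tsub_le_iff_right.mpr h'
      rwa [hquarter_sub] at h''
    -- (i) support condition
    have haeq : (fun p : ℝ × ℝ => ENNReal.ofReal (p.2 - p.1)) =ᵐ[μ]
        fun p => ENNReal.ofReal (1/2 - p.1) + ENNReal.ofReal (p.2 - 1/2) := by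
      refine ae_eq_of_ae_le_of_lintegral_le (Eventually.of_forall hpt) ?_ (mA.add mB).aemeasurable ?_
      · rw [← hLdef, hLeq]; exact ENNReal.ofReal_ne_top
      · rw [lintegral_add_left mA, ← hAdef, ← hBdef, hABeq, ← hLdef, hLeq]
    have hbox_ae : ∀ᵐ p ∂μ, p ∈ Set.Icc (0:ℝ) (1/2) ×ˢ Set.Icc (1/2:ℝ) 1 := by
      filter_upwards [haeq, hTri_ae] with p hp hpT
      obtain ⟨hx0, hxy, hy1⟩ := hpT
      have hy2 : 1/2 ≤ p.2 := by
        by_contra hy2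
        push_neg at hy2
        rw [ENNReal.ofReal_eq_zero.mpr (by linarith : p.2 - 1/2 ≤ 0), add_zero] at hp
        exact absurd hp (ne_of_lt ((ENNReal.ofReal_lt_ofReal_iff (by linarith)).mpr (by linarith)))
      have hx2 : p.1 ≤ 1/2 := by
        by_contra hx2
        push_neg at hx2
        rw [ENNReal.ofReal_eq_zero.mpr (by linarith : 1/2 - p.1 ≤ 0), zero_add] at hp
        exact absurd hp (ne_of_lt ((ENNReal.ofReal_lt_ofReal_iff (by linarith)).mpr (by linarith)))
      exact ⟨⟨hx0, hx2⟩, ⟨hy2, hy1⟩⟩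
    have h0 : μ ((Set.Icc (0:ℝ) (1/2) ×ˢ Set.Icc (1/2:ℝ) 1)ᶜ) = 0 := by
      rw [ae_iff] at hbox_ae
      exact hbox_ae
    -- (ii) x-marginal
    have haeA : (fun t : ℝ => μ {p : ℝ × ℝ | p.1 < 1/2 - t}) =ᵐ[volume.restrict (Ioi 0)]
        fun t => ENNReal.ofReal (1/2 - t) := by
      refine ae_eq_of_ae_le_of_lintegral_le ?_ ?_ hbound_meas.aemeasurable ?_
      · rw [Filter.EventuallyLE, ae_restrict_iff' measurableSet_Ioi]
        exact Eventually.of_forall fun t ht => hgA t ht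
      · rw [← hAlayer, hAeq]; exact ENNReal.ofReal_ne_top
      · rw [S17.C_val, ← hAlayer, hAeq]
    have hnullA : volume (Ioo (0:ℝ) (1/2) \
        {t : ℝ | μ {p : ℝ × ℝ | p.1 < 1/2 - t} = ENNReal.ofReal (1/2 - t)}) = 0 := by
      have h' := haeA
      rw [Filter.EventuallyEq, ae_iff, Measure.restrict_apply' measurableSet_Ioi] at h'
      refine measure_mono_null ?_ h'
      intro t ht
      exact ⟨ht.2, ht.1.1⟩
    have hS1 : ∀ a b : ℝ, 0 ≤ a → a < b → b ≤ 1/2 →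
        ∃ s, a < s ∧ s < b ∧ μ {p : ℝ × ℝ | p.1 < s} = ENNReal.ofReal s := by
      intro a b ha hab hb
      obtain ⟨t, htS, ht1, ht2⟩ := S17.dense_of_null_diff hnullA
        (by linarith : (0:ℝ) ≤ 1/2 - b) (by linarith : 1/2 - b < 1/2 - a)
        (by linarith : 1/2 - a ≤ 1/2)
      exact ⟨1/2 - t, by linarith, by linarith, htS⟩
    have hupper_half : μ {p : ℝ × ℝ | p.1 ≤ 1/2} ≤ ENNReal.ofReal (1/2) := by
      have hsubset : {p : ℝ × ℝ | p.1 ≤ 1/2}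
          ⊆ {p : ℝ × ℝ | 0 ≤ p.1 ∧ p.1 ≤ 1/2} ∪ Triᶜ := by
        intro p hp
        by_cases hT : p ∈ Tri
        · exact Or.inl ⟨hT.1, hp⟩
        · exact Or.inr hT
      calc μ {p : ℝ × ℝ | p.1 ≤ 1/2}
          ≤ μ ({p : ℝ × ℝ | 0 ≤ p.1 ∧ p.1 ≤ 1/2} ∪ Triᶜ) := measure_mono hsubset
        _ ≤ μ {p : ℝ × ℝ | 0 ≤ p.1 ∧ p.1 ≤ 1/2} + μ Triᶜ := measure_union_le _ _
        _ = μ {p : ℝ × ℝ | 0 ≤ p.1 ∧ p.1 ≤ 1/2} := by rw [hsupp, add_zero]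
        _ ≤ ENNReal.ofReal (1/2 - 0) := hx 0 (1/2) (by norm_num)
        _ = ENNReal.ofReal (1/2) := by rw [sub_zero]
    have key1 : ∀ c : ℝ, 0 ≤ c → c ≤ 1/2 →
        μ {p : ℝ × ℝ | p.1 < c} = ENNReal.ofReal c ∧
        μ {p : ℝ × ℝ | p.1 ≤ c} = ENNReal.ofReal c := by
      intro c hc0 hc2
      have hlow : ENNReal.ofReal c ≤ μ {p : ℝ × ℝ | p.1 < c} := by
        refine S17.ofReal_le_of_forall_sub fun ε hε => ?_
        rcases le_or_gt (c - ε) 0 with h | h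
        · rw [ENNReal.ofReal_eq_zero.mpr h]; exact zero_le
        · obtain ⟨s, hs1, hs2, hs3⟩ := hS1 (c - ε) c (le_of_lt h) (by linarith) hc2
          calc ENNReal.ofReal (c - ε) ≤ ENNReal.ofReal s :=
              ENNReal.ofReal_le_ofReal (le_of_lt hs1)
            _ = μ {p : ℝ × ℝ | p.1 < s} := hs3.symm
            _ ≤ μ {p : ℝ × ℝ | p.1 < c} := measure_mono fun p hp => lt_trans hp hs2
      have hup : μ {p : ℝ × ℝ | p.1 ≤ c} ≤ ENNReal.ofReal c := by
        rcases eq_or_lt_of_le hc2 with hceq | hclt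
        · subst hceq
          exact hupper_half
        · refine S17.le_ofReal_of_forall_add fun ε hε => ?_
          obtain ⟨s, hs1, hs2, hs3⟩ := hS1 c (min (c + ε) (1/2)) hc0
            (lt_min (by linarith) hclt) (min_le_right _ _)
          calc μ {p : ℝ × ℝ | p.1 ≤ c} ≤ μ {p : ℝ × ℝ | p.1 < s} :=
              measure_mono fun p hp => lt_of_le_of_lt hp hs1
            _ = ENNReal.ofReal s := hs3
            _ ≤ ENNReal.ofReal (c + ε) :=
              ENNReal.ofReal_le_ofReal (le_of_lt (lt_of_lt_of_le hs2 (min_le_left _ _)))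
      have hsub_lt_le : {p : ℝ × ℝ | p.1 < c} ⊆ {p : ℝ × ℝ | p.1 ≤ c} :=
        setOf_subset_setOf.mpr fun p hp => le_of_lt hp
      exact ⟨le_antisymm ((measure_mono hsub_lt_le).trans hup) hlow,
        le_antisymm hup (hlow.trans (measure_mono hsub_lt_le))⟩
    have hxmarg : ∀ a b : ℝ, 0 ≤ a → a ≤ b → b ≤ 1/2 →
        μ {p : ℝ × ℝ | a ≤ p.1 ∧ p.1 ≤ b} = ENNReal.ofReal (b - a) := by
      intro a b ha hab hb
      have hseteq : {p : ℝ × ℝ | a ≤ p.1 ∧ p.1 ≤ b}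
          = {p : ℝ × ℝ | p.1 ≤ b} \ {p : ℝ × ℝ | p.1 < a} := by
        ext p
        simp only [mem_setOf_eq, mem_diff, not_lt]
        tauto
      have hss : {p : ℝ × ℝ | p.1 < a} ⊆ {p : ℝ × ℝ | p.1 ≤ b} :=
        fun p hp => le_trans (le_of_lt hp) hab
      have hm2 : NullMeasurableSet {p : ℝ × ℝ | p.1 < a} μ :=
        (measurable_fst measurableSet_Iio).nullMeasurableSet
      rw [hseteq, measure_diff hss hm2 (measure_ne_top μ _),
        (key1 b (ha.trans hab) hb).2, (key1 a ha (hab.trans hb)).1,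
        ← ENNReal.ofReal_sub _ ha]
    -- (iii) y-marginal
    have haeB : (fun t : ℝ => μ {p : ℝ × ℝ | 1/2 + t < p.2}) =ᵐ[volume.restrict (Ioi 0)]
        fun t => ENNReal.ofReal (1/2 - t) := by
      refine ae_eq_of_ae_le_of_lintegral_le ?_ ?_ hbound_meas.aemeasurable ?_
      · rw [Filter.EventuallyLE, ae_restrict_iff' measurableSet_Ioi]
        exact Eventually.of_forall fun t ht => hgB t ht
      · rw [← hBlayer, hBeq]; exact ENNReal.ofReal_ne_top
      · rw [S17.C_val, ← hBlayer, hBeq]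
    have hnullB : volume (Ioo (0:ℝ) (1/2) \
        {t : ℝ | μ {p : ℝ × ℝ | 1/2 + t < p.2} = ENNReal.ofReal (1/2 - t)}) = 0 := by
      have h' := haeB
      rw [Filter.EventuallyEq, ae_iff, Measure.restrict_apply' measurableSet_Ioi] at h'
      refine measure_mono_null ?_ h'
      intro t ht
      exact ⟨ht.2, ht.1.1⟩
    have hS2 : ∀ a b : ℝ, 1/2 ≤ a → a < b → b ≤ 1 →
        ∃ s, a < s ∧ s < b ∧ μ {p : ℝ × ℝ | s < p.2} = ENNReal.ofReal (1 - s) := by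
      intro a b ha hab hb
      obtain ⟨t, htS, ht1, ht2⟩ := S17.dense_of_null_diff hnullB
        (by linarith : (0:ℝ) ≤ a - 1/2) (by linarith : a - 1/2 < b - 1/2)
        (by linarith : b - 1/2 ≤ 1/2)
      refine ⟨1/2 + t, by linarith, by linarith, ?_⟩
      have heq1 : (1:ℝ) - (1/2 + t) = 1/2 - t := by ring
      rw [heq1]
      exact htS
    have hupper_halfy : μ {p : ℝ × ℝ | 1/2 ≤ p.2} ≤ ENNReal.ofReal (1/2) := by
      have hsubset : {p : ℝ × ℝ | 1/2 ≤ p.2}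
          ⊆ {p : ℝ × ℝ | 1/2 ≤ p.2 ∧ p.2 ≤ 1} ∪ Triᶜ := by
        intro p hp
        by_cases hT : p ∈ Tri
        · exact Or.inl ⟨hp, hT.2.2⟩
        · exact Or.inr hT
      calc μ {p : ℝ × ℝ | 1/2 ≤ p.2}
          ≤ μ ({p : ℝ × ℝ | 1/2 ≤ p.2 ∧ p.2 ≤ 1} ∪ Triᶜ) := measure_mono hsubset
        _ ≤ μ {p : ℝ × ℝ | 1/2 ≤ p.2 ∧ p.2 ≤ 1} + μ Triᶜ := measure_union_le _ _
        _ = μ {p : ℝ × ℝ | 1/2 ≤ p.2 ∧ p.2 ≤ 1} := by rw [hsupp, add_zero]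
        _ ≤ ENNReal.ofReal (1 - 1/2) := hy (1/2) 1 (by norm_num)
        _ = ENNReal.ofReal (1/2) := by norm_num
    have key2 : ∀ c : ℝ, 1/2 ≤ c → c ≤ 1 →
        μ {p : ℝ × ℝ | c < p.2} = ENNReal.ofReal (1 - c) ∧
        μ {p : ℝ × ℝ | c ≤ p.2} = ENNReal.ofReal (1 - c) := by
      intro c hc0 hc1
      have hlow : ENNReal.ofReal (1 - c) ≤ μ {p : ℝ × ℝ | c < p.2} := by
        refine S17.ofReal_le_of_forall_sub fun ε hε => ?_
        rcases le_or_gt (1 - c - ε) 0 with h | h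
        · rw [ENNReal.ofReal_eq_zero.mpr h]; exact zero_le
        · obtain ⟨s, hs1, hs2, hs3⟩ := hS2 c (min (c + ε) 1) hc0
            (lt_min (by linarith) (by linarith)) (min_le_right _ _)
          have hcs : s < c + ε := lt_of_lt_of_le hs2 (min_le_left _ _)
          have hsub2 : {p : ℝ × ℝ | s < p.2} ⊆ {p : ℝ × ℝ | c < p.2} :=
            fun p hp => lt_trans hs1 hp
          calc ENNReal.ofReal (1 - c - ε) ≤ ENNReal.ofReal (1 - s) :=
              ENNReal.ofReal_le_ofReal (by linarith)
            _ = μ {p : ℝ × ℝ | s < p.2} := hs3.symm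
            _ ≤ μ {p : ℝ × ℝ | c < p.2} := measure_mono hsub2
      have hup : μ {p : ℝ × ℝ | c ≤ p.2} ≤ ENNReal.ofReal (1 - c) := by
        rcases eq_or_lt_of_le hc0 with hceq | hclt
        · rw [← hceq, show (1:ℝ) - (1/2) = 1/2 by norm_num]
          have : c = 1/2 := hceq.symm
          subst this
          exact hupper_halfy
        · refine S17.le_ofReal_of_forall_add fun ε hε => ?_
          obtain ⟨s, hs1, hs2, hs3⟩ := hS2 (max (c - ε) (1/2)) c (le_max_right _ _)
            (max_lt (by linarith) hclt) hc1
          have hcs : c - ε < s := lt_of_le_of_lt (le_max_left (c - ε) (1/2)) hs1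
          have hsub2 : {p : ℝ × ℝ | c ≤ p.2} ⊆ {p : ℝ × ℝ | s < p.2} :=
            fun p hp => lt_of_lt_of_le hs2 hp
          calc μ {p : ℝ × ℝ | c ≤ p.2} ≤ μ {p : ℝ × ℝ | s < p.2} := measure_mono hsub2
            _ = ENNReal.ofReal (1 - s) := hs3
            _ ≤ ENNReal.ofReal (1 - c + ε) := ENNReal.ofReal_le_ofReal (by linarith)
      have hsub_lt_le : {p : ℝ × ℝ | c < p.2} ⊆ {p : ℝ × ℝ | c ≤ p.2} :=
        setOf_subset_setOf.mpr fun p hp => le_of_lt hp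
      exact ⟨le_antisymm ((measure_mono hsub_lt_le).trans hup) hlow,
        le_antisymm hup (hlow.trans (measure_mono hsub_lt_le))⟩
    have hymarg : ∀ a b : ℝ, 1/2 ≤ a → a ≤ b → b ≤ 1 →
        μ {p : ℝ × ℝ | a ≤ p.2 ∧ p.2 ≤ b} = ENNReal.ofReal (b - a) := by
      intro a b ha hab hb
      have hseteq : {p : ℝ × ℝ | a ≤ p.2 ∧ p.2 ≤ b}
          = {p : ℝ × ℝ | a ≤ p.2} \ {p : ℝ × ℝ | b < p.2} := by
        ext p
        simp only [mem_setOf_eq, mem_diff, not_lt]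
      have hss : {p : ℝ × ℝ | b < p.2} ⊆ {p : ℝ × ℝ | a ≤ p.2} :=
        fun p hp => le_trans hab (le_of_lt hp)
      have hm2 : NullMeasurableSet {p : ℝ × ℝ | b < p.2} μ :=
        (measurable_snd measurableSet_Ioi).nullMeasurableSet
      rw [hseteq, measure_diff hss hm2 (measure_ne_top μ _),
        (key2 b (ha.trans hab) hb).1, (key2 a ha (hab.trans hb)).2,
        ← ENNReal.ofReal_sub _ (by linarith : (0:ℝ) ≤ 1 - b),
        show (1:ℝ) - a - (1 - b) = b - a by ring]
    exact ⟨h0, hxmarg, hymarg⟩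
  · -- backward direction
    rintro ⟨h0, h1, h2⟩
    have hbox_ae : ∀ᵐ p ∂μ, p ∈ Set.Icc (0:ℝ) (1/2) ×ˢ Set.Icc (1/2:ℝ) 1 := by
      rw [ae_iff]
      exact measure_mono_null (fun p hp => hp) h0
    have hgA_eq : ∀ t : ℝ, 0 < t →
        μ {p : ℝ × ℝ | p.1 < 1/2 - t} = ENNReal.ofReal (1/2 - t) := by
      intro t ht
      refine le_antisymm (hgA t ht) (S17.ofReal_le_of_forall_sub fun ε hε => ?_)
      rcases le_or_gt (1/2 - t - ε) 0 with h | h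
      · rw [ENNReal.ofReal_eq_zero.mpr h]; exact zero_le
      · have heq := h1 0 (1/2 - t - ε) le_rfl (by linarith) (by linarith)
        rw [sub_zero] at heq
        calc ENNReal.ofReal (1/2 - t - ε)
            = μ {p : ℝ × ℝ | 0 ≤ p.1 ∧ p.1 ≤ 1/2 - t - ε} := heq.symm
          _ ≤ μ {p : ℝ × ℝ | p.1 < 1/2 - t} :=
            measure_mono fun p hp => lt_of_le_of_lt hp.2 (by linarith)
    have hgB_eq : ∀ t : ℝ, 0 < t →
        μ {p : ℝ × ℝ | 1/2 + t < p.2} = ENNReal.ofReal (1/2 - t) := by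
      intro t ht
      refine le_antisymm (hgB t ht) (S17.ofReal_le_of_forall_sub fun ε hε => ?_)
      rcases le_or_gt (1/2 - t - ε) 0 with h | h
      · rw [ENNReal.ofReal_eq_zero.mpr h]; exact zero_le
      · have heq := h2 (1/2 + t + ε) 1 (by linarith) (by linarith) le_rfl
        rw [show (1:ℝ) - (1/2 + t + ε) = 1/2 - t - ε by ring] at heq
        calc ENNReal.ofReal (1/2 - t - ε)
            = μ {p : ℝ × ℝ | 1/2 + t + ε ≤ p.2 ∧ p.2 ≤ 1} := heq.symm
          _ ≤ μ {p : ℝ × ℝ | 1/2 + t < p.2} :=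
            measure_mono fun p hp => lt_of_lt_of_le (by linarith) hp.1
    have hAeq : A = ENNReal.ofReal (1/8) := by
      rw [hAlayer, ← S17.C_val]
      exact setLIntegral_congr_fun measurableSet_Ioi
        (fun t ht => hgA_eq t ht)
    have hBeq : B = ENNReal.ofReal (1/8) := by
      rw [hBlayer, ← S17.C_val]
      exact setLIntegral_congr_fun measurableSet_Ioi
        (fun t ht => hgB_eq t ht)
    have hLeq : L = A + B := by
      have hcongr : (fun p : ℝ × ℝ => ENNReal.ofReal (p.2 - p.1)) =ᵐ[μ]
          fun p => ENNReal.ofReal (1/2 - p.1) + ENNReal.ofReal (p.2 - 1/2) := by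
        filter_upwards [hbox_ae] with p hp
        obtain ⟨⟨hx0, hx2⟩, hy2, hy1⟩ := hp
        rw [← ENNReal.ofReal_add (by linarith) (by linarith)]
        congr 1
        ring
      rw [hLdef, hAdef, hBdef, lintegral_congr_ae hcongr, ← lintegral_add_left mA]
    rw [hInt, hLeq, hAeq, hBeq, hAB4, ENNReal.toReal_ofReal (by norm_num)]
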